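/- Define γ = ∑_{j=1}^∞ 1/n_j where n₁ = 100 and n_{j+1} = (n₁ n₂ ⋯ n_j)³. Then for every k ∈ ℕ, |e^{2πi n_k γ} − 1| < 14/n_k², and for all k ∈ ℕ and l ≥ 2, |e^{2πi n_k n_l γ} − 1| < 14/(n_k n_l). -/

import Mathlib

open Complex Real

private def lacE : ℕ → ℕ := fun j => if j ≤ 1 then 1 else 3 * 4 ^ (j - 2)

private lemma lacE_pos (j : ℕ) : 0 < lacE j := by
  unfold lacE; split_ifs <;> positivity

private lemma lacE_mono {i j : ℕ} (h : i ≤ j) : lacE i ≤ lacE j := by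
  unfold lacE
  rcases le_or_gt i 1 with hi | hi
  · rcases le_or_gt j 1 with hj | hj
    · rw [if_pos hi, if_pos hj]
    · rw [if_pos hi, if_neg (by omega)]
      have : 0 < 3 * 4 ^ (j - 2) := by positivity
      omega
  · rw [if_neg (by omega), if_neg (by omega)]
    exact Nat.mul_le_mul_left 3 (Nat.pow_le_pow_right (by norm_num) (by omega))

private lemma lacE_succ {j : ℕ} (hj : 1 ≤ j) : lacE (j + 1) = 3 * 4 ^ (j - 1) := by
  unfold lacE
  rw [if_neg (by omega)]
  have h2 : j + 1 - 2 = j - 1 := by omega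
  rw [h2]

private lemma abs_exp_I_sub_one_le (θ : ℝ) :
    ‖Complex.exp ((θ : ℂ) * Complex.I) - 1‖ ≤ |θ| := by
  have h1 : Complex.exp ((θ : ℂ) * Complex.I) - 1
      = ((Real.cos θ - 1 : ℝ) : ℂ) + ((Real.sin θ : ℝ) : ℂ) * Complex.I := by
    rw [Complex.exp_mul_I]
    push_cast
    ring
  rw [h1, Complex.norm_add_mul_I]
  have h2 : (Real.cos θ - 1) ^ 2 + Real.sin θ ^ 2 ≤ θ ^ 2 := by
    have hs := Real.sin_sq_add_cos_sq θ
    have hc := Real.one_sub_sq_div_two_le_cos (x := θ)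
    nlinarith
  calc Real.sqrt ((Real.cos θ - 1) ^ 2 + Real.sin θ ^ 2)
      ≤ Real.sqrt (θ ^ 2) := Real.sqrt_le_sqrt h2
    _ = |θ| := Real.sqrt_sq_eq_abs θ

section aux

variable {n : ℕ → ℕ}

private lemma n_formula (h1 : n 1 = 100)
    (hrec : ∀ j ≥ 1, n (j + 1) = (∏ i ∈ Finset.Icc 1 j, n i) ^ 3) :
    ∀ j, 1 ≤ j → n j = 100 ^ lacE j := by
  have hP : ∀ j, 1 ≤ j → ∏ i ∈ Finset.Icc 1 j, n i = 100 ^ 4 ^ (j - 1) := by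
    intro j hj
    induction j with
    | zero => omega
    | succ j ih =>
      by_cases hj0 : j = 0
      · subst hj0; simp [h1]
      · have hj1 : 1 ≤ j := by omega
        rw [Finset.prod_Icc_succ_top (by omega : 1 ≤ j + 1), ih hj1, hrec j hj1, ih hj1,
          ← pow_mul, ← pow_add]
        congr 1
        have h4 : 4 ^ (j - 1) + 4 ^ (j - 1) * 3 = 4 ^ (j - 1) * 4 := by ring
        rw [h4, ← pow_succ]
        congr 1
        omega
  intro j hj
  by_cases hj1 : j = 1
  · subst hj1; simp [h1, lacE]
  · obtain ⟨i, rfl⟩ : ∃ i, j = i + 1 := ⟨j - 1, by omega⟩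
    have hi : 1 ≤ i := by omega
    rw [hrec i hi, hP i hi, ← pow_mul, lacE_succ hi]
    congr 1
    ring

variable (hn : ∀ j, 1 ≤ j → n j = 100 ^ lacE j)

include hn

private lemma n_pos : ∀ j, 1 ≤ j → 0 < n j := by
  intro j hj; rw [hn j hj]; positivity

private lemma n_dvd : ∀ j k, 1 ≤ j → j ≤ k → n j ∣ n k := by
  intro j k hj hk
  rw [hn j hj, hn k (le_trans hj hk)]
  exact pow_dvd_pow 100 (lacE_mono hk)

private lemma n_cube_le : ∀ k, 1 ≤ k → n k ^ 3 ≤ n (k + 1) := by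
  intro k hk
  rw [hn k hk, hn (k + 1) (by omega), ← pow_mul, lacE_succ hk]
  apply Nat.pow_le_pow_right (by norm_num)
  have : lacE k ≤ 4 ^ (k - 1) := by
    unfold lacE
    split_ifs with h
    · exact Nat.one_le_pow _ _ (by norm_num)
    · calc 3 * 4 ^ (k - 2) ≤ 4 * 4 ^ (k - 2) := by omega
        _ = 4 ^ (k - 2 + 1) := by rw [pow_succ]; ring
        _ = 4 ^ (k - 1) := by congr 1; omega
  omega

private lemma n_sq_le {k l : ℕ} (hk : 1 ≤ k) (hl : 2 ≤ l) :
    (n k * n l) ^ 2 ≤ n (max k l + 1) := by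
  have hM : 1 ≤ max k l := le_trans hk (le_max_left _ _)
  have hM2 : 2 ≤ max k l := le_trans hl (le_max_right _ _)
  rw [hn k hk, hn l (by omega), hn (max k l + 1) (by omega), lacE_succ hM,
    ← pow_add, ← pow_mul]
  apply Nat.pow_le_pow_right (by norm_num)
  have h1 : lacE k ≤ lacE (max k l) := lacE_mono (le_max_left _ _)
  have h2 : lacE l ≤ lacE (max k l) := lacE_mono (le_max_right _ _)
  have h3 : lacE (max k l) = 3 * 4 ^ (max k l - 2) := by
    unfold lacE; rw [if_neg (by omega)]
  have h4 : 3 * 4 ^ (max k l - 1) = 4 * (3 * 4 ^ (max k l - 2)) := by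
    have : max k l - 1 = (max k l - 2) + 1 := by omega
    rw [this, pow_succ]; ring
  omega

private lemma n_tail_growth : ∀ M, 1 ≤ M → ∀ j : ℕ, n (M + 1) * 2 ^ j ≤ n (j + M + 1) := by
  intro M hM j
  rw [hn (M + 1) (by omega), hn (j + M + 1) (by omega), lacE_succ hM,
    lacE_succ (by omega : 1 ≤ j + M)]
  have hje : 4 ^ j ≥ j + 1 := by
    calc 4 ^ j ≥ 2 ^ j := Nat.pow_le_pow_left (by norm_num) j
      _ ≥ j + 1 := Nat.lt_two_pow_self
  have hexp : 3 * 4 ^ (M - 1) + j ≤ 3 * 4 ^ (j + M - 1) := by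
    have h1 : 4 ^ (j + M - 1) = 4 ^ (M - 1) * 4 ^ j := by
      rw [← pow_add]; congr 1; omega
    have h2 : 1 ≤ 4 ^ (M - 1) := Nat.one_le_pow _ _ (by norm_num)
    calc 3 * 4 ^ (M - 1) + j ≤ 3 * 4 ^ (M - 1) * (j + 1) := by nlinarith
      _ ≤ 3 * (4 ^ (M - 1) * 4 ^ j) := by nlinarith
      _ = 3 * 4 ^ (j + M - 1) := by rw [h1]
  calc 100 ^ (3 * 4 ^ (M - 1)) * 2 ^ j ≤ 100 ^ (3 * 4 ^ (M - 1)) * 100 ^ j := by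
        exact Nat.mul_le_mul_left _ (Nat.pow_le_pow_left (by norm_num) j)
    _ = 100 ^ (3 * 4 ^ (M - 1) + j) := by rw [← pow_add]
    _ ≤ 100 ^ (3 * 4 ^ (j + M - 1)) := Nat.pow_le_pow_right (by norm_num) hexp

private lemma n_ge_two_pow : ∀ j : ℕ, 2 ^ j ≤ n (j + 1) := by
  intro j
  rw [hn (j + 1) (by omega)]
  have hE : j ≤ lacE (j + 1) := by
    unfold lacE
    split_ifs with h
    · omega
    · have h1 : j < 2 ^ j := Nat.lt_two_pow_self
      have h2 : 2 ^ j ≤ 3 * 4 ^ (j + 1 - 2) := by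
        have hj1 : 1 ≤ j := by omega
        have : j + 1 - 2 = j - 1 := by omega
        rw [this]
        calc 2 ^ j = 2 * 2 ^ (j - 1) := by
              rw [← pow_succ']; congr 1; omega
          _ ≤ 3 * 4 ^ (j - 1) :=
              Nat.mul_le_mul (by norm_num)
                (Nat.pow_le_pow_left (by norm_num : 2 ≤ 4) (j - 1))
      omega
  calc 2 ^ j ≤ 2 ^ lacE (j + 1) := Nat.pow_le_pow_right (by norm_num) hE
    _ ≤ 100 ^ lacE (j + 1) := Nat.pow_le_pow_left (by norm_num) _

private lemma n_summable : Summable (fun j : ℕ => 1 / (n (j + 1) : ℝ)) := by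
  apply Summable.of_nonneg_of_le (fun j => by positivity)
    (fun j => ?_) (summable_geometric_of_lt_one (by norm_num) (by norm_num : (1/2:ℝ) < 1))
  have h := n_ge_two_pow hn j
  have h2 : (0:ℝ) < 2 ^ j := by positivity
  have h3 : (2:ℝ) ^ j ≤ (n (j + 1) : ℝ) := by exact_mod_cast h
  rw [div_pow, one_pow]
  exact one_div_le_one_div_of_le h2 h3

private lemma n_tail_bound : ∀ M, 1 ≤ M →
    (∑' j : ℕ, 1 / (n (j + M + 1) : ℝ)) ≤ 2 / (n (M + 1) : ℝ) := by
  intro M hM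
  have hpos : (0:ℝ) < n (M + 1) := by exact_mod_cast n_pos hn (M + 1) (by omega)
  have hterm : ∀ j : ℕ, 1 / (n (j + M + 1) : ℝ) ≤ (1 / (n (M + 1) : ℝ)) * (1/2) ^ j := by
    intro j
    have h := n_tail_growth hn M hM j
    have h' : (n (M + 1) : ℝ) * 2 ^ j ≤ (n (j + M + 1) : ℝ) := by exact_mod_cast h
    have h2 : (0:ℝ) < (n (M + 1) : ℝ) * 2 ^ j := by positivity
    have := one_div_le_one_div_of_le h2 h'
    calc 1 / (n (j + M + 1) : ℝ) ≤ 1 / ((n (M + 1) : ℝ) * 2 ^ j) := this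
      _ = (1 / (n (M + 1) : ℝ)) * (1/2) ^ j := by
          rw [div_pow, one_pow]; field_simp
  have hsum1 : Summable (fun j : ℕ => 1 / (n (j + M + 1) : ℝ)) :=
    (summable_nat_add_iff M).mpr (n_summable hn)
  have hsum2 : Summable (fun j : ℕ => (1 / (n (M + 1) : ℝ)) * (1/2) ^ j) :=
    (summable_geometric_of_lt_one (by norm_num) (by norm_num : (1/2:ℝ) < 1)).mul_left _
  calc (∑' j : ℕ, 1 / (n (j + M + 1) : ℝ))
      ≤ ∑' j : ℕ, (1 / (n (M + 1) : ℝ)) * (1/2) ^ j := hsum1.tsum_le_tsum hterm hsum2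
    _ = (1 / (n (M + 1) : ℝ)) * (1 - 1/2)⁻¹ := by
        rw [tsum_mul_left, tsum_geometric_of_lt_one (by norm_num) (by norm_num)]
    _ = 2 / (n (M + 1) : ℝ) := by ring

private lemma key_estimate (γ : ℝ) (hγ : γ = ∑' j : ℕ, 1 / (n (j + 1) : ℝ))
    (m M : ℕ) (hM : 1 ≤ M) (hdvd : ∀ j, 1 ≤ j → j ≤ M → n j ∣ m) :
    ‖Complex.exp (2 * Real.pi * Complex.I * (m : ℂ) * (γ : ℂ)) - 1‖ ≤
      4 * Real.pi * m / (n (M + 1) : ℝ) := by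
  have hsum := n_summable hn
  set f : ℕ → ℝ := fun i => 1 / (n (i + 1) : ℝ) with hf
  set S := ∑ i ∈ Finset.range M, f i with hS
  set T := ∑' i : ℕ, f (i + M) with hT
  have hγST : γ = S + T := by
    rw [hγ, ← Summable.sum_add_tsum_nat_add M hsum]
  have hT0 : 0 ≤ T := tsum_nonneg (fun i => by positivity)
  have hTle : T ≤ 2 / (n (M + 1) : ℝ) := n_tail_bound hn M hM
  have hq : ∃ q : ℕ, (q : ℝ) = m * S := by
    refine ⟨∑ i ∈ Finset.range M, m / n (i + 1), ?_⟩
    rw [Nat.cast_sum, hS, Finset.mul_sum]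
    apply Finset.sum_congr rfl
    intro i hi
    have hi' : i + 1 ≤ M := Finset.mem_range.1 hi
    have hd := hdvd (i + 1) (by omega) hi'
    have hpos : (n (i + 1) : ℝ) ≠ 0 := by
      have := n_pos hn (i + 1) (by omega)
      positivity
    rw [Nat.cast_div hd hpos, hf]
    simp [mul_one_div, div_eq_mul_inv]
  obtain ⟨q, hq⟩ := hq
  have harg : 2 * (Real.pi : ℂ) * Complex.I * (m : ℂ) * (γ : ℂ)
      = ((q : ℤ) : ℂ) * (2 * (Real.pi : ℂ) * Complex.I)
        + ((2 * Real.pi * (m * T) : ℝ) : ℂ) * Complex.I := by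
    have hγc : (γ : ℂ) = ((S : ℝ) : ℂ) + ((T : ℝ) : ℂ) := by
      rw [hγST]; push_cast; ring
    have hq' : ((q : ℤ) : ℂ) = (m : ℂ) * ((S : ℝ) : ℂ) := by
      exact_mod_cast congrArg Complex.ofReal hq
    rw [hγc, hq']
    push_cast
    ring
  rw [harg, Complex.exp_add, Complex.exp_int_mul_two_pi_mul_I, one_mul]
  have hmain := abs_exp_I_sub_one_le (2 * Real.pi * (m * T))
  have hnn : 0 ≤ 2 * Real.pi * (m * T) := by
    have := Real.pi_pos
    have hm0 : (0:ℝ) ≤ (m:ℝ) := Nat.cast_nonneg m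
    positivity
  rw [_root_.abs_of_nonneg hnn] at hmain
  calc ‖Complex.exp (((2 * Real.pi * (m * T) : ℝ) : ℂ) * Complex.I) - 1‖
      ≤ 2 * Real.pi * (m * T) := hmain
    _ ≤ 2 * Real.pi * (m * (2 / (n (M + 1) : ℝ))) := by
        have := Real.pi_pos
        have hm0 : (0:ℝ) ≤ (m:ℝ) := Nat.cast_nonneg m
        have := mul_le_mul_of_nonneg_left hTle hm0
        nlinarith
    _ = 4 * Real.pi * m / (n (M + 1) : ℝ) := by ring

end aux

theorem exp_estimates_for_lacunary_sum (n : ℕ → ℕ) (h1 : n 1 = 100)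
    (hrec : ∀ j ≥ 1, n (j + 1) = (∏ i ∈ Finset.Icc 1 j, n i) ^ 3)
    (γ : ℝ) (hγ : γ = ∑' j : ℕ, 1 / (n (j + 1) : ℝ)) :
    (∀ k ≥ 1,
        ‖Complex.exp (2 * Real.pi * Complex.I * (n k : ℂ) * (γ : ℂ)) - 1‖ <
          14 / (n k : ℝ) ^ 2) ∧
      (∀ k ≥ 1, ∀ l ≥ 2,
        ‖Complex.exp (2 * Real.pi * Complex.I * ((n k : ℂ) * (n l : ℂ)) * (γ : ℂ)) - 1‖ <
          14 / ((n k : ℝ) * (n l : ℝ))) := by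
  have hn := n_formula h1 hrec
  have hpi := Real.pi_pos
  have hpi2 : Real.pi < 3.15 := Real.pi_lt_d2
  constructor
  · intro k hk
    have hkpos : 0 < n k := n_pos hn k hk
    have hkpos' : (0:ℝ) < (n k : ℝ) := by exact_mod_cast hkpos
    have hk1pos : (0:ℝ) < (n (k + 1) : ℝ) := by
      exact_mod_cast n_pos hn (k + 1) (by omega)
    have hkey := key_estimate hn γ hγ (n k) k hk (fun j hj hjk => n_dvd hn j k hj hjk)
    have hcube : ((n k : ℝ)) ^ 3 ≤ (n (k + 1) : ℝ) := by
      exact_mod_cast n_cube_le hn k hk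
    calc ‖Complex.exp (2 * Real.pi * Complex.I * (n k : ℂ) * (γ : ℂ)) - 1‖
        ≤ 4 * Real.pi * (n k : ℝ) / (n (k + 1) : ℝ) := hkey
      _ ≤ 4 * Real.pi * (n k : ℝ) / ((n k : ℝ)) ^ 3 := by
          apply div_le_div_of_nonneg_left (by positivity) (by positivity) hcube
      _ = 4 * Real.pi / (n k : ℝ) ^ 2 := by
          field_simp
      _ < 14 / (n k : ℝ) ^ 2 := by
          apply (div_lt_div_iff_of_pos_right (by positivity : (0:ℝ) < (n k : ℝ) ^ 2)).mpr
          nlinarith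
  · intro k hk l hl
    have hkpos : (0:ℝ) < (n k : ℝ) := by exact_mod_cast n_pos hn k hk
    have hlpos : (0:ℝ) < (n l : ℝ) := by exact_mod_cast n_pos hn l (by omega)
    set M := max k l with hM
    have hM1 : 1 ≤ M := le_trans hk (le_max_left _ _)
    have hM1pos : (0:ℝ) < (n (M + 1) : ℝ) := by
      exact_mod_cast n_pos hn (M + 1) (by omega)
    have hdvd : ∀ j, 1 ≤ j → j ≤ M → n j ∣ n k * n l := by
      intro j hj hjM
      rcases le_or_gt j k with h | h
      · exact Dvd.dvd.mul_right (n_dvd hn j k hj h) _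
      · have hjl : j ≤ l := by
          rcases max_cases k l with ⟨he, _⟩ | ⟨he, hc⟩
          · omega
          · omega
        exact Dvd.dvd.mul_left (n_dvd hn j l hj hjl) _
    have hkey := key_estimate hn γ hγ (n k * n l) M hM1 hdvd
    have hsq : ((n k : ℝ) * (n l : ℝ)) ^ 2 ≤ (n (M + 1) : ℝ) := by
      have := n_sq_le hn hk hl
      calc ((n k : ℝ) * (n l : ℝ)) ^ 2 = ((n k * n l) ^ 2 : ℕ) := by push_cast; ring
        _ ≤ (n (M + 1) : ℝ) := by exact_mod_cast this
    have hcast : ((n k * n l : ℕ) : ℂ) = (n k : ℂ) * (n l : ℂ) := by push_cast; ring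
    rw [← hcast]
    calc ‖Complex.exp (2 * Real.pi * Complex.I * ((n k * n l : ℕ) : ℂ) * (γ : ℂ)) - 1‖
        ≤ 4 * Real.pi * ((n k * n l : ℕ) : ℝ) / (n (M + 1) : ℝ) := hkey
      _ ≤ 4 * Real.pi * ((n k : ℝ) * (n l : ℝ)) / ((n k : ℝ) * (n l : ℝ)) ^ 2 := by
          have hc : ((n k * n l : ℕ) : ℝ) = (n k : ℝ) * (n l : ℝ) := by push_cast; ring
          rw [hc]
          apply div_le_div_of_nonneg_left (by positivity) (by positivity) hsq
      _ = 4 * Real.pi / ((n k : ℝ) * (n l : ℝ)) := by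
          field_simp
      _ < 14 / ((n k : ℝ) * (n l : ℝ)) := by
          apply (div_lt_div_iff_of_pos_right (by positivity : (0:ℝ) < (n k : ℝ) * (n l : ℝ))).mpr
          nlinarith
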